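/- Let λ₁ ≤ λ₂ ≤ … ≤ λₙ be positive integers, N = λ₁+…+λₙ, μᵢ = λ₁+…+λ_{i−1}; for p ∈ {1,…,N} let b(p) be the unique index with μ_{b(p)} < p ≤ μ_{b(p)}+λ_{b(p)}, r(p) = p − μ_{b(p)}, and x(p) = (λ_{b(p)}+1)/2 − r(p). For p ≠ q set γ(p,q) = x(p) − x(q) and γ•(p,q) = (if b(p) = m then x(p) else 0) − (if b(q) = m then x(q) else 0) where m = max(b(p), b(q)), and let c[t] = 12t(t−1) + 2. Then Σ_{(p,q): p≠q, γ(p,q)>0} c[γ(p,q)] − (1/2)·Σ_{(p,q): p≠q, γ(p,q)=1/2} c[γ(p,q)] = Σ_{(p,q): p≠q, γ•(p,q)>0} c[γ(p,q)] − (1/2)·Σ_{(p,q): p≠q, γ•(p,q)=1/2} c[γ(p,q)]. -/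

import Mathlib

set_option linter.constructorNameAsVariable false

def wgt (s : ℚ) : ℚ := (if 0 < s then 1 else 0) - (1/2) * (if s = 1/2 then 1 else 0)
def cc (t : ℚ) : ℚ := 12*t*(t-1)+2
def gg (t : ℚ) : ℚ := if t = 0 then 0 else if t = 1/2 ∨ t = -1/2 then -1/2 else if 0 < t then cc t else cc (-t)
def Ww (v : ℚ) : ℚ := wgt v + wgt (-v)
def Dd (u v : ℚ) : ℚ := (wgt (u-v) - wgt (-v)) * cc (u-v) + (wgt (v-u) - wgt v) * cc (v-u)
def Sg (b : ℕ) (u : ℚ) : ℚ := ∑ i ∈ Finset.range b, gg (((b:ℚ)-1)/2 - (i:ℚ) + u)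

lemma wgt_of_nonpos (s : ℚ) (h : s ≤ 0) : wgt s = 0 := by
  unfold wgt
  rw [if_neg (by linarith), if_neg (by intro h'; rw [h'] at h; norm_num at h)]; ring

lemma wgt_of_pos_ne (s : ℚ) (h : 0 < s) (h2 : s ≠ 1/2) : wgt s = 1 := by
  unfold wgt; rw [if_pos h, if_neg h2]; ring

lemma wgt_of_one_le (s : ℚ) (h : 1 ≤ s) : wgt s = 1 :=
  wgt_of_pos_ne s (by linarith) (by intro h'; rw [h'] at h; norm_num at h)

lemma wgt_half : wgt (1/2) = 1/2 := by unfold wgt; norm_num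

lemma Ww_neg (v : ℚ) : Ww (-v) = Ww v := by simp [Ww, add_comm]

lemma Ww_of_one_le (v : ℚ) (h : 1 ≤ v) : Ww v = 1 := by
  rw [Ww, wgt_of_one_le v h, wgt_of_nonpos (-v) (by linarith)]; ring

lemma gg_even (t : ℚ) : gg (-t) = gg t := by
  by_cases h0 : t = 0
  · simp [h0]
  · have h0' : ¬ (-t = 0) := by simpa using h0
    by_cases hh : t = 1/2 ∨ t = -1/2
    · have hh' : -t = 1/2 ∨ -t = -1/2 := by
        rcases hh with h|h
        · right; rw [h]; norm_num
        · left; rw [h]; norm_num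
      rw [gg, gg, if_neg h0, if_neg h0', if_pos hh, if_pos hh']
    · have hh' : ¬(-t = 1/2 ∨ -t = -1/2) := by
        rintro (h|h)
        · exact hh (Or.inr (by linarith))
        · exact hh (Or.inl (by linarith))
      by_cases hp : 0 < t
      · rw [gg, gg, if_neg h0, if_neg h0', if_neg hh, if_neg hh', if_pos hp,
          if_neg (by linarith), neg_neg]
      · have hp' : 0 < -t := by
          rcases lt_trichotomy t 0 with h|h|h
          · linarith
          · exact absurd h h0
          · exact absurd h hp
        rw [gg, gg, if_neg h0, if_neg h0', if_neg hh, if_neg hh', if_pos hp', if_neg hp]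

lemma gg_eval (t : ℚ) (h : 1 ≤ t) : gg t = cc t := by
  unfold gg
  have : ¬ (t = 1/2 ∨ t = -1/2) := by rintro (h'|h') <;> rw [h'] at h <;> norm_num at h
  rw [if_neg (by intro h'; rw [h'] at h; norm_num at h), if_neg this, if_pos (by linarith)]

lemma G1 (t : ℚ) : gg t = wgt t * cc t + wgt (-t) * cc (-t) := by
  by_cases h0 : t = 0
  · subst h0; norm_num [gg, wgt_of_nonpos 0 le_rfl]
  · by_cases hh : t = 1/2 ∨ t = -1/2
    · have hgg : gg t = -1/2 := by rw [gg, if_neg h0, if_pos hh]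
      rcases hh with h|h <;> subst h
      · rw [hgg, wgt_half, wgt_of_nonpos (-(1/2) : ℚ) (by norm_num)]
        norm_num [cc]
      · have a1 : -(-1/2 : ℚ) = 1/2 := by norm_num
        rw [hgg, a1, wgt_half, wgt_of_nonpos (-1/2 : ℚ) (by norm_num)]
        norm_num [cc]
    · push_neg at hh
      by_cases hp : 0 < t
      · rw [gg, if_neg h0, if_neg (by push_neg; exact hh), if_pos hp,
          wgt_of_pos_ne t hp hh.1, wgt_of_nonpos (-t) (by linarith)]
        ring
      · have hp' : 0 < -t := by
          rcases lt_trichotomy t 0 with h|h|h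
          · linarith
          · exact absurd h h0
          · exact absurd h hp
        rw [gg, if_neg h0, if_neg (by push_neg; exact hh), if_neg hp,
          wgt_of_pos_ne (-t) hp' (by intro h'; exact hh.2 (by linarith)),
          wgt_of_nonpos t (by linarith)]
        ring

lemma PW (u v : ℚ) : Dd u v + Dd (-u) v
    = gg (v-u) + gg (v+u) - 2 * gg v - 24*u^2 * Ww v := by
  have e1 : gg (v-u) = wgt (u-v) * cc (u-v) + wgt (v-u) * cc (v-u) := by
    rw [show v - u = -(u-v) by ring, gg_even, G1, show -(u-v) = v - u by ring]
  have e2 : gg (v+u) = wgt (u+v) * cc (u+v) + wgt (-(u+v)) * cc (-(u+v)) := by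
    rw [show v + u = u + v by ring, G1]
  have e3 : gg v = wgt v * cc v + wgt (-v) * cc (-v) := G1 v
  rw [e1, e2, e3, Ww]
  have r1 : Dd (-u) v = (wgt (-(u+v)) - wgt (-v)) * cc (-(u+v)) + (wgt (u+v) - wgt v) * cc (u+v) := by
    rw [Dd, show -u - v = -(u+v) by ring, show v - -u = u + v by ring]
  rw [Dd, r1]
  simp only [cc]
  ring

lemma STEP (h : ℚ → ℚ) (b : ℕ) :
    ∑ i ∈ Finset.range (b+2), h (((b:ℚ)+1)/2 - (i:ℚ))
      = h (((b:ℚ)+1)/2) + h (-(((b:ℚ)+1)/2)) + ∑ i ∈ Finset.range b, h (((b:ℚ)-1)/2 - (i:ℚ)) := by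
  have A := Finset.sum_range_succ' (fun i : ℕ => h (((b:ℚ)+1)/2 - (i:ℚ))) (b+1)
  have B := Finset.sum_range_succ (fun i : ℕ => h (((b:ℚ)+1)/2 - ((i:ℚ)+1))) b
  have C : (∑ x ∈ Finset.range b, h (((b:ℚ)+1)/2 - ((x:ℚ)+1)))
      = ∑ x ∈ Finset.range b, h (((b:ℚ)-1)/2 - (x:ℚ)) :=
    Finset.sum_congr rfl (fun x _ => by congr 1; ring)
  push_cast at A B
  rw [show b+2 = b+1+1 by omega, A, B, C,
    show ((b:ℚ)+1)/2 - ((b:ℚ)+1) = -(((b:ℚ)+1)/2) by ring,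
    show ((b:ℚ)+1)/2 - (0:ℚ) = ((b:ℚ)+1)/2 by ring]
  ring

lemma SgSTEP (b : ℕ) (u : ℚ) :
    Sg (b+2) u = gg (((b:ℚ)+1)/2 + u) + gg (-(((b:ℚ)+1)/2) + u) + Sg b u := by
  have H := STEP (fun x => gg (x + u)) b
  have e : (∑ i ∈ Finset.range (b+2), gg (((((b+2:ℕ)):ℚ) - 1)/2 - (i:ℚ) + u))
      = ∑ i ∈ Finset.range (b+2), gg (((b:ℚ)+1)/2 - (i:ℚ) + u) :=
    Finset.sum_congr rfl (fun i _ => by congr 1; push_cast; ring)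
  rw [Sg, e, H, Sg]

lemma WSUM : ∀ b : ℕ, 1 ≤ b → ∑ i ∈ Finset.range b, Ww (((b:ℚ)-1)/2 - (i:ℚ)) = (b:ℚ) - 1 := by
  intro b
  induction b using Nat.strong_induction_on with
  | _ b ih =>
    match b with
    | 0 => intro h; exact absurd h (by omega)
    | 1 => intro _; norm_num [Ww, wgt]
    | 2 =>
      intro _
      rw [Finset.sum_range_succ, Finset.sum_range_succ, Finset.sum_range_zero]
      norm_num [Ww, wgt]
    | (m+3) =>
      intro _
      have key := STEP Ww (m+1)
      have e : (∑ i ∈ Finset.range (m+3), Ww (((((m+3:ℕ)):ℚ) - 1)/2 - (i:ℚ)))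
          = ∑ i ∈ Finset.range ((m+1)+2), Ww ((((m+1:ℕ):ℚ)+1)/2 - (i:ℚ)) :=
        Finset.sum_congr (by norm_num) (fun i _ => by congr 1; push_cast; ring)
      rw [e, key, Ww_neg, Ww_of_one_le _ (by push_cast; have h0 : (0:ℚ) ≤ (m:ℚ) := Nat.cast_nonneg m; linarith)]
      have ih' := ih (m+1) (by omega) (by omega)
      push_cast at ih' ⊢
      rw [ih']
      ring

lemma TEL (m : ℕ) (u : ℚ) :
    Sg (m+1) (u+1) = Sg (m+1) u + gg ((m:ℚ)/2 + u + 1) - gg (u - (m:ℚ)/2) := by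
  rw [Sg, Sg]
  rw [Finset.sum_range_succ' (fun i : ℕ => gg ((((m+1:ℕ):ℚ)-1)/2 - (i:ℚ) + (u+1))) m]
  rw [Finset.sum_range_succ (fun i : ℕ => gg ((((m+1:ℕ):ℚ)-1)/2 - (i:ℚ) + u)) m]
  have C : (∑ i ∈ Finset.range m, gg ((((m+1:ℕ):ℚ)-1)/2 - ((i+1:ℕ):ℚ) + (u+1)))
      = ∑ i ∈ Finset.range m, gg ((((m+1:ℕ):ℚ)-1)/2 - (i:ℚ) + u) :=
    Finset.sum_congr rfl (fun i _ => by congr 1; push_cast; ring)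
  rw [C, show (((m+1:ℕ):ℚ)-1)/2 - ((0:ℕ):ℚ) + (u+1) = (m:ℚ)/2 + u + 1 by push_cast; ring,
    show (((m+1:ℕ):ℚ)-1)/2 - ((m:ℕ):ℚ) + u = u - (m:ℚ)/2 by push_cast; ring]
  ring

lemma QL : ∀ b : ℕ, 2 ≤ b → Sg b (1/2) = Sg b 0 + 3*((b:ℚ)-1) := by
  intro b
  induction b using Nat.strong_induction_on with
  | _ b ih =>
    match b with
    | 0 => intro h; exact absurd h (by omega)
    | 1 => intro h; exact absurd h (by omega)
    | 2 =>
      intro _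
      norm_num [Sg, Finset.sum_range_succ, gg, cc]
    | 3 =>
      intro _
      norm_num [Sg, Finset.sum_range_succ, gg, cc]
    | (m+4) =>
      intro _
      have S1 := SgSTEP (m+2) (1/2)
      have S0 := SgSTEP (m+2) 0
      have e4 : m+4 = (m+2)+2 := by omega
      rw [e4, S1, S0]
      have hm : (0:ℚ) ≤ (m:ℚ) := Nat.cast_nonneg m
      rw [show ((((m+2:ℕ)):ℚ)+1)/2 + (1/2 : ℚ) = ((m:ℚ)+4)/2 by push_cast; ring]
      rw [show -(((((m+2:ℕ)):ℚ)+1)/2) + (1/2 : ℚ) = -(((m:ℚ)+2)/2) by push_cast; ring]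
      rw [gg_even, gg_eval _ (by linarith), gg_eval _ (by linarith)]
      rw [show -(((((m+2:ℕ)):ℚ)+1)/2) + (0 : ℚ) = -(((m:ℚ)+3)/2) by push_cast; ring]
      rw [show ((((m+2:ℕ)):ℚ)+1)/2 + (0 : ℚ) = ((m:ℚ)+3)/2 by push_cast; ring]
      rw [gg_even, gg_eval _ (by linarith)]
      rw [ih (m+2) (by omega) (by omega)]
      simp only [cc]
      push_cast
      ring

lemma MAIN1 : ∀ j : ℕ, ∀ b : ℕ, 1 ≤ b → j ≤ b - 1 →
    Sg b ((j:ℚ)/2) = Sg b 0 + 3*(j:ℚ)^2*((b:ℚ)-1) := by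
  intro j
  induction j using Nat.strong_induction_on with
  | _ j ih =>
    match j with
    | 0 => intro b hb _; norm_num
    | 1 =>
      intro b hb h1
      have := QL b (by omega)
      push_cast
      rw [this]; ring
    | (j+2) =>
      intro b hb h2
      obtain ⟨m, rfl⟩ : ∃ m, b = m+1 := ⟨b-1, by omega⟩
      have hjm : j + 2 ≤ m := by omega
      have hjm' : (j:ℚ) + 2 ≤ (m:ℚ) := by exact_mod_cast hjm
      have hj0 : (0:ℚ) ≤ (j:ℚ) := Nat.cast_nonneg j
      have T := TEL m ((j:ℚ)/2)
      have e : (((j+2:ℕ)):ℚ)/2 = (j:ℚ)/2 + 1 := by push_cast; ring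
      rw [e, T, ih j (by omega) (m+1) hb (by omega)]
      rw [gg_eval ((m:ℚ)/2 + (j:ℚ)/2 + 1) (by linarith)]
      rw [show (j:ℚ)/2 - (m:ℚ)/2 = -((((m:ℚ)-(j:ℚ)))/2) by ring, gg_even,
        gg_eval _ (by linarith)]
      simp only [cc]
      push_cast
      ring

lemma SgREV (b : ℕ) (u : ℚ) : Sg b (-u) = Sg b u := by
  rw [Sg, Sg, ← Finset.sum_range_reflect (fun i : ℕ => gg (((b:ℚ)-1)/2 - (i:ℚ) + u)) b]
  apply Finset.sum_congr rfl
  intro i hi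
  have hi' : i < b := Finset.mem_range.mp hi
  have hc : ((b - 1 - i : ℕ) : ℚ) = (b:ℚ) - 1 - (i:ℚ) := by
    have h2 : i ≤ b - 1 := by omega
    have h1 : (1:ℕ) ≤ b := by omega
    push_cast [Nat.cast_sub h2, Nat.cast_sub h1]
    ring
  rw [hc, show ((b:ℚ)-1)/2 - ((b:ℚ)-1-(i:ℚ)) + u = -(((b:ℚ)-1)/2 - (i:ℚ) + -u) by ring, gg_even]

lemma ROW (b : ℕ) (hb : 1 ≤ b) (j : ℕ) (hj : j ≤ b - 1) (u : ℚ)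
    (hu : 2*u = (j:ℚ) ∨ 2*u = -(j:ℚ)) :
    ∑ i ∈ Finset.range b,
      (Dd u (((b:ℚ)-1)/2 - (i:ℚ)) + Dd (-u) (((b:ℚ)-1)/2 - (i:ℚ))) = 0 := by
  have e1 : ∀ i : ℕ, Dd u (((b:ℚ)-1)/2 - (i:ℚ)) + Dd (-u) (((b:ℚ)-1)/2 - (i:ℚ))
      = gg ((((b:ℚ)-1)/2 - (i:ℚ)) - u) + gg ((((b:ℚ)-1)/2 - (i:ℚ)) + u)
        - 2 * gg (((b:ℚ)-1)/2 - (i:ℚ)) - 24*u^2 * Ww (((b:ℚ)-1)/2 - (i:ℚ)) := fun i => PW u _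
  rw [Finset.sum_congr rfl (fun i _ => e1 i), Finset.sum_sub_distrib, Finset.sum_sub_distrib,
    Finset.sum_add_distrib, ← Finset.mul_sum, ← Finset.mul_sum]
  have hA : (∑ i ∈ Finset.range b, gg ((((b:ℚ)-1)/2 - (i:ℚ)) - u)) = Sg b (-u) := by
    rw [Sg]; exact Finset.sum_congr rfl (fun i _ => by congr 1; ring)
  have hB : (∑ i ∈ Finset.range b, gg ((((b:ℚ)-1)/2 - (i:ℚ)) + u)) = Sg b u := by
    rw [Sg]
  have hC : (∑ i ∈ Finset.range b, gg (((b:ℚ)-1)/2 - (i:ℚ))) = Sg b 0 := by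
    rw [Sg]; exact Finset.sum_congr rfl (fun i _ => by congr 1; ring)
  have hu2 : u^2 = ((j:ℚ)/2)^2 := by rcases hu with h|h <;> nlinarith
  have huu : Sg b u = Sg b ((j:ℚ)/2) := by
    rcases hu with h|h
    · rw [show u = (j:ℚ)/2 by linarith]
    · rw [show u = -((j:ℚ)/2) by linarith, SgREV]
  have huu' : Sg b (-u) = Sg b ((j:ℚ)/2) := by rw [SgREV, huu]
  rw [hA, hB, hC, huu, huu', WSUM b hb, MAIN1 j b hb hj]
  linear_combination (-24*((b:ℚ)-1)) * hu2

lemma PHI (a b : ℕ) (ha : 1 ≤ a) (hab : a ≤ b) :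
    ∑ k ∈ Finset.range a, ∑ l ∈ Finset.range b,
      Dd (((a:ℚ)-1)/2 - (k:ℚ)) (((b:ℚ)-1)/2 - (l:ℚ)) = 0 := by
  have refl : (∑ k ∈ Finset.range a, ∑ l ∈ Finset.range b,
        Dd (((a:ℚ)-1)/2 - (k:ℚ)) (((b:ℚ)-1)/2 - (l:ℚ)))
      = ∑ k ∈ Finset.range a, ∑ l ∈ Finset.range b,
        Dd (-(((a:ℚ)-1)/2 - (k:ℚ))) (((b:ℚ)-1)/2 - (l:ℚ)) := by
    rw [← Finset.sum_range_reflect (fun k : ℕ => ∑ l ∈ Finset.range b,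
      Dd (((a:ℚ)-1)/2 - (k:ℚ)) (((b:ℚ)-1)/2 - (l:ℚ))) a]
    apply Finset.sum_congr rfl
    intro k hk
    have hk' : k < a := Finset.mem_range.mp hk
    have hc : ((a - 1 - k : ℕ) : ℚ) = (a:ℚ) - 1 - (k:ℚ) := by
      have h2 : k ≤ a - 1 := by omega
      have h1 : (1:ℕ) ≤ a := ha
      push_cast [Nat.cast_sub h2, Nat.cast_sub h1]
      ring
    apply Finset.sum_congr rfl
    intro l _
    rw [hc, show ((a:ℚ)-1)/2 - ((a:ℚ) - 1 - (k:ℚ)) = -(((a:ℚ)-1)/2 - (k:ℚ)) by ring]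
  have hzero : ∑ k ∈ Finset.range a, ∑ l ∈ Finset.range b,
      (Dd (((a:ℚ)-1)/2 - (k:ℚ)) (((b:ℚ)-1)/2 - (l:ℚ))
        + Dd (-(((a:ℚ)-1)/2 - (k:ℚ))) (((b:ℚ)-1)/2 - (l:ℚ))) = 0 := by
    apply Finset.sum_eq_zero
    intro k hk
    have hk' : k < a := Finset.mem_range.mp hk
    rcases le_or_gt (2*k+1) a with hle|hlt
    · have hcast : ((a - 1 - 2*k : ℕ) : ℚ) = (a:ℚ) - 1 - 2*(k:ℚ) := by
        have h2 : 2*k ≤ a - 1 := by omega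
        push_cast [Nat.cast_sub h2, Nat.cast_sub (ha : (1:ℕ) ≤ a)]
        ring
      exact ROW b (le_trans ha hab) (a - 1 - 2*k) (by omega) _
        (Or.inl (by rw [hcast]; ring))
    · have hcast : ((2*k+1-a : ℕ) : ℚ) = 2*(k:ℚ) + 1 - (a:ℚ) := by
        have h2 : a ≤ 2*k+1 := by omega
        push_cast [Nat.cast_sub h2]
        ring
      exact ROW b (le_trans ha hab) (2*k+1-a) (by omega) _
        (Or.inr (by rw [hcast]; ring))
  have expand : ∑ k ∈ Finset.range a, ∑ l ∈ Finset.range b,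
      (Dd (((a:ℚ)-1)/2 - (k:ℚ)) (((b:ℚ)-1)/2 - (l:ℚ))
        + Dd (-(((a:ℚ)-1)/2 - (k:ℚ))) (((b:ℚ)-1)/2 - (l:ℚ)))
      = (∑ k ∈ Finset.range a, ∑ l ∈ Finset.range b,
          Dd (((a:ℚ)-1)/2 - (k:ℚ)) (((b:ℚ)-1)/2 - (l:ℚ)))
        + ∑ k ∈ Finset.range a, ∑ l ∈ Finset.range b,
          Dd (-(((a:ℚ)-1)/2 - (k:ℚ))) (((b:ℚ)-1)/2 - (l:ℚ)) := by
    rw [← Finset.sum_add_distrib]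
    exact Finset.sum_congr rfl (fun k _ => by rw [← Finset.sum_add_distrib])
  rw [expand, ← refl] at hzero
  linarith

lemma wgt_mul (s x : ℚ) :
    wgt s * x = (if 0 < s then x else 0) - (1/2)*(if s = 1/2 then x else 0) := by
  unfold wgt; split_ifs <;> ring


/-- Equality of the total ghost central charges for the one-step quantum
Hamiltonian reduction and the reduction by stages, for a partition `λ₁ ≤ … ≤ λₙ` of `N`,
where `c[t] = 12t(t-1) + 2`. -/
theorem partition_central_charge_identity (n : ℕ) (lam : Fin n → ℕ)
    (hmono : Monotone lam) (hpos : ∀ i, 0 < lam i)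
    (N : ℕ) (hN : N = ∑ i, lam i)
    (μ : Fin n → ℕ) (hμ : ∀ i, μ i = ∑ j ∈ Finset.Iio i, lam j)
    (b : ℕ → Fin n)
    (hb : ∀ p, 1 ≤ p → p ≤ N → μ (b p) < p ∧ p ≤ μ (b p) + lam (b p))
    (r : ℕ → ℕ) (hr : ∀ p, r p = p - μ (b p))
    (x : ℕ → ℚ) (hx : ∀ p, x p = ((lam (b p) : ℚ) + 1) / 2 - (r p : ℚ))
    (γ : ℕ × ℕ → ℚ) (hγ : ∀ pq, γ pq = x pq.1 - x pq.2)
    (γd : ℕ × ℕ → ℚ)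
    (hγd : ∀ pq, γd pq =
      (if b pq.1 = max (b pq.1) (b pq.2) then x pq.1 else 0)
        - (if b pq.2 = max (b pq.1) (b pq.2) then x pq.2 else 0))
    (c : ℚ → ℚ) (hc : ∀ t, c t = 12 * t * (t - 1) + 2) :
    (∑ pq ∈ (Finset.Icc 1 N).offDiag.filter (fun pq => 0 < γ pq), c (γ pq))
      - (1/2) * ∑ pq ∈ (Finset.Icc 1 N).offDiag.filter (fun pq => γ pq = 1/2), c (γ pq)
    = (∑ pq ∈ (Finset.Icc 1 N).offDiag.filter (fun pq => 0 < γd pq), c (γ pq))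
      - (1/2) * ∑ pq ∈ (Finset.Icc 1 N).offDiag.filter (fun pq => γd pq = 1/2), c (γ pq) := by
  classical
  have hcc : ∀ t, c t = cc t := fun t => by rw [hc]; rfl
  have w0 : wgt 0 = 0 := wgt_of_nonpos 0 le_rfl
  set S : Finset ℕ := Finset.Icc 1 N with hSdef
  set f : ℕ × ℕ → ℚ := fun pq => (wgt (γ pq) - wgt (γd pq)) * c (γ pq) with hfdef
  -- basic block facts
  have hord : ∀ i j : Fin n, i < j → μ i + lam i ≤ μ j := by
    intro i j hij
    rw [hμ i, hμ j]
    have hsub : insert i (Finset.Iio i) ⊆ Finset.Iio j := by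
      intro t ht
      rcases Finset.mem_insert.mp ht with h|h
      · exact Finset.mem_Iio.mpr (h ▸ hij)
      · exact Finset.mem_Iio.mpr (lt_trans (Finset.mem_Iio.mp h) hij)
    calc (∑ k ∈ Finset.Iio i, lam k) + lam i = ∑ k ∈ insert i (Finset.Iio i), lam k := by
          rw [Finset.sum_insert (by simp)]; ring
      _ ≤ ∑ k ∈ Finset.Iio j, lam k := Finset.sum_le_sum_of_subset hsub
  have hbound : ∀ i : Fin n, μ i + lam i ≤ N := by
    intro i
    rw [hμ i, hN]
    calc (∑ k ∈ Finset.Iio i, lam k) + lam i = ∑ k ∈ insert i (Finset.Iio i), lam k := by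
          rw [Finset.sum_insert (by simp)]; ring
      _ ≤ ∑ k, lam k := Finset.sum_le_sum_of_subset (Finset.subset_univ _)
  have hblk : ∀ (i : Fin n) (t : ℕ), t < lam i → b (μ i + 1 + t) = i := by
    intro i t ht
    have hp1 : 1 ≤ μ i + 1 + t := by omega
    have hpN : μ i + 1 + t ≤ N := by have := hbound i; omega
    obtain ⟨h1, h2⟩ := hb (μ i + 1 + t) hp1 hpN
    by_contra hne
    rcases lt_or_gt_of_ne hne with hlt|hgt
    · have := hord (b (μ i + 1 + t)) i hlt; omega
    · have := hord i (b (μ i + 1 + t)) hgt; omega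
  have hxval : ∀ (i : Fin n) (t : ℕ), t < lam i →
      x (μ i + 1 + t) = ((lam i : ℚ)-1)/2 - (t:ℚ) := by
    intro i t ht
    rw [hx, hr, hblk i t ht]
    have he : μ i + 1 + t - μ i = t + 1 := by omega
    rw [he]; push_cast; ring
  -- generic block decomposition of sums over S
  have hsum : ∀ h : ℕ → ℚ,
      ∑ p ∈ S, h p = ∑ i : Fin n, ∑ t ∈ Finset.range (lam i), h (μ i + 1 + t) := by
    intro h
    rw [← Finset.sum_sigma (Finset.univ) (fun i => Finset.range (lam i))
      (fun st => h (μ st.1 + 1 + st.2))]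
    apply Finset.sum_nbij' (i := fun p => (⟨b p, p - μ (b p) - 1⟩ : Σ _ : Fin n, ℕ))
      (j := fun st => μ st.1 + 1 + st.2)
    · intro p hp
      rw [hSdef] at hp
      obtain ⟨hp1, hpN⟩ := Finset.mem_Icc.mp hp
      obtain ⟨h1, h2⟩ := hb p hp1 hpN
      refine Finset.mem_sigma.mpr ⟨Finset.mem_univ _, Finset.mem_range.mpr ?_⟩
      show p - μ (b p) - 1 < lam (b p)
      omega
    · intro st hst
      obtain ⟨-, h2⟩ := Finset.mem_sigma.mp hst
      have h2' := Finset.mem_range.mp h2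
      have := hbound st.1
      rw [hSdef]
      exact Finset.mem_Icc.mpr ⟨by omega, by omega⟩
    · intro p hp
      rw [hSdef] at hp
      obtain ⟨hp1, hpN⟩ := Finset.mem_Icc.mp hp
      obtain ⟨h1, h2⟩ := hb p hp1 hpN
      simp only
      omega
    · intro st hst
      obtain ⟨-, h2⟩ := Finset.mem_sigma.mp hst
      have h2' := Finset.mem_range.mp h2
      have hbv := hblk st.1 st.2 h2'
      have harg : μ st.1 + 1 + st.2 - μ (b (μ st.1 + 1 + st.2)) - 1 = st.2 := by
        rw [hbv]; omega
      exact Sigma.ext hbv (by rw [harg])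
    · intro p hp
      rw [hSdef] at hp
      obtain ⟨hp1, hpN⟩ := Finset.mem_Icc.mp hp
      obtain ⟨h1, h2⟩ := hb p hp1 hpN
      simp only
      congr 1
      omega
  -- pointwise value of f on blocks
  have hfval : ∀ (i j : Fin n) (t s : ℕ), t < lam i → s < lam j →
      f (μ i + 1 + t, μ j + 1 + s)
        = (wgt (((((lam i:ℕ):ℚ)-1)/2 - (t:ℚ)) - ((((lam j:ℕ):ℚ)-1)/2 - (s:ℚ)))
            - wgt ((if i = max i j then (((lam i:ℕ):ℚ)-1)/2 - (t:ℚ) else 0)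
                - (if j = max i j then (((lam j:ℕ):ℚ)-1)/2 - (s:ℚ) else 0)))
          * cc (((((lam i:ℕ):ℚ)-1)/2 - (t:ℚ)) - ((((lam j:ℕ):ℚ)-1)/2 - (s:ℚ))) := by
    intro i j t s ht hs
    rw [hfdef]
    simp only [hγ, hγd, hcc]
    rw [hblk i t ht, hblk j s hs, hxval i t ht, hxval j s hs]
  set G : Fin n → Fin n → ℚ := fun i j =>
    ∑ t ∈ Finset.range (lam i), ∑ s ∈ Finset.range (lam j),
      (wgt (((((lam i:ℕ):ℚ)-1)/2 - (t:ℚ)) - ((((lam j:ℕ):ℚ)-1)/2 - (s:ℚ)))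
          - wgt ((if i = max i j then (((lam i:ℕ):ℚ)-1)/2 - (t:ℚ) else 0)
              - (if j = max i j then (((lam j:ℕ):ℚ)-1)/2 - (s:ℚ) else 0)))
        * cc (((((lam i:ℕ):ℚ)-1)/2 - (t:ℚ)) - ((((lam j:ℕ):ℚ)-1)/2 - (s:ℚ))) with hGdef
  have hGdiag : ∀ i, G i i = 0 := by
    intro i
    rw [hGdef]
    apply Finset.sum_eq_zero; intro t _
    apply Finset.sum_eq_zero; intro s _
    rw [if_pos (max_self i).symm, if_pos (max_self i).symm]
    ring
  have hpair' : ∀ i j, i < j → G i j + G j i = 0 := by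
    intro i j hlt
    have hmax : max i j = j := max_eq_right hlt.le
    have hmax' : max j i = j := max_eq_left hlt.le
    have h1 : G i j = ∑ t ∈ Finset.range (lam i), ∑ s ∈ Finset.range (lam j),
        (wgt (((((lam i:ℕ):ℚ)-1)/2 - (t:ℚ)) - ((((lam j:ℕ):ℚ)-1)/2 - (s:ℚ)))
            - wgt (-((((lam j:ℕ):ℚ)-1)/2 - (s:ℚ))))
          * cc (((((lam i:ℕ):ℚ)-1)/2 - (t:ℚ)) - ((((lam j:ℕ):ℚ)-1)/2 - (s:ℚ))) := by
      rw [hGdef]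
      refine Finset.sum_congr rfl (fun t _ => Finset.sum_congr rfl (fun s _ => ?_))
      rw [hmax, if_neg (ne_of_lt hlt), if_pos rfl, zero_sub]
    have h2 : G j i = ∑ t ∈ Finset.range (lam i), ∑ s ∈ Finset.range (lam j),
        (wgt (((((lam j:ℕ):ℚ)-1)/2 - (s:ℚ)) - ((((lam i:ℕ):ℚ)-1)/2 - (t:ℚ)))
            - wgt ((((lam j:ℕ):ℚ)-1)/2 - (s:ℚ)))
          * cc (((((lam j:ℕ):ℚ)-1)/2 - (s:ℚ)) - ((((lam i:ℕ):ℚ)-1)/2 - (t:ℚ))) := by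
      rw [hGdef]
      simp only
      rw [Finset.sum_comm]
      refine Finset.sum_congr rfl (fun t _ => Finset.sum_congr rfl (fun s _ => ?_))
      rw [hmax', if_neg (ne_of_lt hlt), if_pos rfl, sub_zero]
    rw [h1, h2, ← Finset.sum_add_distrib]
    have merge : ∀ t ∈ Finset.range (lam i),
        ((∑ s ∈ Finset.range (lam j),
          (wgt (((((lam i:ℕ):ℚ)-1)/2 - (t:ℚ)) - ((((lam j:ℕ):ℚ)-1)/2 - (s:ℚ)))
              - wgt (-((((lam j:ℕ):ℚ)-1)/2 - (s:ℚ))))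
            * cc (((((lam i:ℕ):ℚ)-1)/2 - (t:ℚ)) - ((((lam j:ℕ):ℚ)-1)/2 - (s:ℚ))))
        + ∑ s ∈ Finset.range (lam j),
          (wgt (((((lam j:ℕ):ℚ)-1)/2 - (s:ℚ)) - ((((lam i:ℕ):ℚ)-1)/2 - (t:ℚ)))
              - wgt ((((lam j:ℕ):ℚ)-1)/2 - (s:ℚ)))
            * cc (((((lam j:ℕ):ℚ)-1)/2 - (s:ℚ)) - ((((lam i:ℕ):ℚ)-1)/2 - (t:ℚ))))
        = ∑ s ∈ Finset.range (lam j),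
            Dd ((((lam i:ℕ):ℚ)-1)/2 - (t:ℚ)) ((((lam j:ℕ):ℚ)-1)/2 - (s:ℚ)) := by
      intro t _
      rw [← Finset.sum_add_distrib]
      exact Finset.sum_congr rfl (fun s _ => by rw [Dd])
    rw [Finset.sum_congr rfl merge]
    exact PHI (lam i) (lam j) (hpos i) (hmono hlt.le)
  have hGpair : ∀ p : Fin n × Fin n, G p.1 p.2 + G p.2 p.1 = 0 := by
    intro p
    by_cases h : p.1 = p.2
    · rw [h, hGdiag]; ring
    · rcases lt_or_gt_of_ne h with hlt|hgt
      · exact hpair' p.1 p.2 hlt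
      · rw [add_comm]; exact hpair' p.2 p.1 hgt
  have key : ∑ pq ∈ S ×ˢ S, f pq = 0 := by
    rw [Finset.sum_product]
    rw [hsum (fun p => ∑ q ∈ S, f (p, q))]
    have inner : ∀ i : Fin n, ∀ t ∈ Finset.range (lam i),
        (∑ q ∈ S, f (μ i + 1 + t, q))
          = ∑ j : Fin n, ∑ s ∈ Finset.range (lam j), f (μ i + 1 + t, μ j + 1 + s) :=
      fun i t _ => hsum (fun q => f (μ i + 1 + t, q))
    rw [Finset.sum_congr rfl (fun i _ => Finset.sum_congr rfl (fun t ht => inner i t ht))]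
    have step2 : ∀ i : Fin n,
        (∑ t ∈ Finset.range (lam i), ∑ j : Fin n, ∑ s ∈ Finset.range (lam j),
          f (μ i + 1 + t, μ j + 1 + s)) = ∑ j : Fin n, G i j := by
      intro i
      rw [Finset.sum_comm]
      refine Finset.sum_congr rfl (fun j _ => ?_)
      rw [hGdef]
      exact Finset.sum_congr rfl (fun t ht => Finset.sum_congr rfl (fun s hs =>
        hfval i j t s (Finset.mem_range.mp ht) (Finset.mem_range.mp hs)))
    rw [Finset.sum_congr rfl (fun i _ => step2 i)]
    have invol : ∑ p ∈ (Finset.univ ×ˢ Finset.univ : Finset (Fin n × Fin n)), G p.1 p.2 = 0 := by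
      apply Finset.sum_ninvolution (g := Prod.swap)
      · intro a; exact hGpair a
      · intro a ha hswap
        apply ha
        have : a.2 = a.1 := congrArg Prod.fst hswap
        rw [this, hGdiag]
      · intro a; exact Finset.mem_product.mpr ⟨Finset.mem_univ _, Finset.mem_univ _⟩
      · intro a; exact Prod.swap_swap a
    rw [Finset.sum_product] at invol
    exact invol
  -- diagonal vanishing and transfer to offDiag
  have fdiag : ∀ p : ℕ, f (p, p) = 0 := by
    intro p
    have h1 : γ (p, p) = 0 := by rw [hγ]; simp
    have h2 : γd (p, p) = 0 := by rw [hγd]; simp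
    rw [hfdef]
    simp only [h1, h2, w0]
    ring
  have prodoff : ∑ pq ∈ S.offDiag, f pq = ∑ pq ∈ S ×ˢ S, f pq := by
      apply Finset.sum_subset
      · intro pq h
        obtain ⟨ha, hb', -⟩ := Finset.mem_offDiag.mp h
        exact Finset.mem_product.mpr ⟨ha, hb'⟩
      · intro pq hmem hnot
        have heq : pq.1 = pq.2 := by
          by_contra hne
          exact hnot (Finset.mem_offDiag.mpr
            ⟨(Finset.mem_product.mp hmem).1, (Finset.mem_product.mp hmem).2, hne⟩)
        have : pq = (pq.1, pq.1) := by
          rw [show pq = (pq.1, pq.2) from rfl, heq]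
        rw [this, fdiag]
  have off0 : ∑ pq ∈ S.offDiag, f pq = 0 := by rw [prodoff, key]
  -- final massage
  have expand : ∑ pq ∈ S.offDiag, f pq
      = ((∑ pq ∈ S.offDiag.filter (fun pq => 0 < γ pq), c (γ pq))
          - (1/2) * ∑ pq ∈ S.offDiag.filter (fun pq => γ pq = 1/2), c (γ pq))
        - ((∑ pq ∈ S.offDiag.filter (fun pq => 0 < γd pq), c (γ pq))
          - (1/2) * ∑ pq ∈ S.offDiag.filter (fun pq => γd pq = 1/2), c (γ pq)) := by
    rw [Finset.sum_filter, Finset.sum_filter, Finset.sum_filter, Finset.sum_filter,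
      Finset.mul_sum, Finset.mul_sum, ← Finset.sum_sub_distrib, ← Finset.sum_sub_distrib,
      ← Finset.sum_sub_distrib]
    apply Finset.sum_congr rfl
    intro pq _
    rw [hfdef]
    simp only
    rw [sub_mul, wgt_mul, wgt_mul]
    try ring
  rw [expand] at off0
  linarith
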